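/- Let G = (V,E) be a finite simple undirected graph, let k > 1 be an integer, and let s, t ∈ V be distinct vertices. Then there exists an (s,t)-vertex cut of size less than k if and only if there exists a fractional (s,t)-vertex cut of size at most k - 1/2. -/

import Mathlib

open MeasureTheory Set
open scoped ENNReal NNReal

/-- If `(L,S,R)` is a vertex cut, every walk starting in `L` and ending at `t ∈ R`
passes through `S`. -/
lemma aux_walk_hits {V : Type*} {G : SimpleGraph V} {L S R : Finset V}
    (hLR : Disjoint L R)
    (hpart : ∀ v, v ∈ L ∨ v ∈ S ∨ v ∈ R)
    (hedge : ∀ u ∈ L, ∀ v ∈ R, ¬ G.Adj u v) {t : V} (htR : t ∈ R) :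
    ∀ {x : V} (p : G.Walk x t), x ∈ L → ∃ v ∈ p.support, v ∈ S := by
  have main : ∀ {x y : V} (p : G.Walk x y), x ∈ L → y ∈ R → ∃ v ∈ p.support, v ∈ S := by
    intro x y p
    induction p with
    | nil => exact fun hx hy => absurd hy (Finset.disjoint_left.mp hLR hx)
    | @cons u w y h q ih =>
      intro hu hy
      rcases hpart w with hw | hw | hw
      · obtain ⟨v, hv, hvS⟩ := ih hw hy
        exact ⟨v, by simp [SimpleGraph.Walk.support_cons, hv], hvS⟩
      · exact ⟨w, by simp [SimpleGraph.Walk.support_cons, q.start_mem_support], hw⟩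
      · exact absurd h (hedge u hu w hw)
  exact fun {x} p hx => main p hx htR

lemma aux_toFinset_sum_le {V : Type*} [DecidableEq V] (C : V → ℝ) (h : ∀ v, 0 ≤ C v) :
    ∀ l : List V, ∑ x ∈ l.toFinset, C x ≤ (l.map C).sum := by
  intro l
  induction l with
  | nil => simp
  | cons a l ih =>
    rw [List.toFinset_cons, List.map_cons, List.sum_cons]
    by_cases ha : a ∈ l.toFinset
    · rw [Finset.insert_eq_self.mpr ha]
      linarith [h a]
    · rw [Finset.sum_insert ha]; linarith

lemma aux_mono {V : Type*} [DecidableEq V] (C : V → ℝ) (h : ∀ v, 0 ≤ C v)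
    (l₁ l₂ : List V) (h₁ : l₁.Nodup) (hsub : ∀ x ∈ l₁, x ∈ l₂) :
    (l₁.map C).sum ≤ (l₂.map C).sum := by
  rw [← List.sum_toFinset _ h₁]
  refine le_trans (Finset.sum_le_sum_of_subset_of_nonneg ?_ (fun v _ _ => h v))
    (aux_toFinset_sum_le C h l₂)
  intro x hx
  rw [List.mem_toFinset] at *
  exact hsub x (by simpa using hx)

theorem stmt_0 {V : Type*} [Fintype V] [DecidableEq V] (G : SimpleGraph V)
    (k : ℕ) (hk : 1 < k) (s t : V) (hst : s ≠ t) :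
    (∃ L S R : Finset V,
        (∀ v, v ∈ L ∨ v ∈ S ∨ v ∈ R) ∧
        Disjoint L S ∧ Disjoint L R ∧ Disjoint S R ∧
        s ∈ L ∧ t ∈ R ∧
        (∀ u ∈ L, ∀ v ∈ R, ¬ G.Adj u v) ∧
        S.card < k) ↔
    (∃ C : V → ℝ, (∀ v, 0 ≤ C v) ∧ C s = 0 ∧ C t = 0 ∧
        (∀ p : G.Walk s t, p.IsPath → 1 ≤ (p.support.map C).sum) ∧
        ∑ v, C v ≤ (k : ℝ) - 1/2) := by
  classical
  constructor
  · rintro ⟨L, S, R, hpart, hLS, hLR, hSR, hsL, htR, hedge, hcard⟩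
    refine ⟨fun v => if v ∈ S then 1 else 0, fun v => by by_cases h : v ∈ S <;> simp [h], ?_, ?_, ?_, ?_⟩
    · simp [Finset.disjoint_left.mp hLS hsL]
    · simp [Finset.disjoint_right.mp hSR htR]
    · intro p _
      obtain ⟨v, hv, hvS⟩ := aux_walk_hits hLR hpart hedge htR p hsL
      have h1 : (if v ∈ S then (1:ℝ) else 0) ≤
          (p.support.map fun v => if v ∈ S then (1:ℝ) else 0).sum := by
        refine List.single_le_sum ?_ _ (List.mem_map_of_mem hv)
        intro x hx
        rcases List.mem_map.mp hx with ⟨y, -, rfl⟩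
        split <;> norm_num
      simpa [hvS] using h1
    · have h2 : (S.card : ℝ) + 1 ≤ k := by exact_mod_cast hcard
      have h3 : ∑ v : V, (if v ∈ S then (1:ℝ) else 0) = S.card := by
        simp [Finset.sum_ite_mem]
      rw [h3]; linarith
  · rintro ⟨C, hC0, hCs, hCt, hpath, hsum⟩
    -- weighted distance from s
    set D : V → ℝ := fun v => if Nonempty (G.Walk s v) then
        sInf (Set.range fun p : G.Walk s v => (p.support.map C).sum) else C v + 2 with hD
    have hwt0 : ∀ {a : V} (p : G.Walk s a), 0 ≤ (p.support.map C).sum := by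
      intro a p
      refine List.sum_nonneg ?_
      intro x hx
      rcases List.mem_map.mp hx with ⟨y, -, rfl⟩
      exact hC0 y
    have hbdd : ∀ a : V, BddBelow (Set.range fun p : G.Walk s a => (p.support.map C).sum) := by
      intro a
      exact ⟨0, by rintro x ⟨p, rfl⟩; exact hwt0 p⟩
    have hDle : ∀ {a : V} (p : G.Walk s a), D a ≤ (p.support.map C).sum := by
      intro a p
      simp only [hD]
      rw [if_pos ⟨p⟩]
      exact csInf_le (hbdd a) ⟨p, rfl⟩
    have hDge : ∀ {a : V}, Nonempty (G.Walk s a) → ∀ c : ℝ,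
        (∀ p : G.Walk s a, c ≤ (p.support.map C).sum) → c ≤ D a := by
      intro a ha c hc
      simp only [hD]
      rw [if_pos ha]
      exact le_csInf (by obtain ⟨p⟩ := ha; exact ⟨_, p, rfl⟩) (by rintro x ⟨p, rfl⟩; exact hc p)
    have hDs : D s = 0 := by
      refine le_antisymm ?_ (hDge ⟨SimpleGraph.Walk.nil⟩ 0 fun p => hwt0 p)
      have := hDle (SimpleGraph.Walk.nil : G.Walk s s)
      simpa [hCs] using this
    have hDt : 1 ≤ D t := by
      by_cases ht : Nonempty (G.Walk s t)
      · refine hDge ht 1 ?_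
        intro p
        have h1 : 1 ≤ (p.bypass.support.map C).sum := hpath p.bypass p.bypass_isPath
        have h2 : (p.bypass.support.map C).sum ≤ (p.support.map C).sum :=
          aux_mono C hC0 _ _ p.bypass_isPath.support_nodup
            (fun x hx => p.support_bypass_subset hx)
        linarith
      · simp only [hD]; rw [if_neg ht]; linarith [hC0 t]
    have hrelax : ∀ u v : V, Nonempty (G.Walk s u) → G.Adj u v → D v - C v ≤ D u := by
      intro u v hu huv
      have h1 : ∀ p : G.Walk s u, D v - C v ≤ (p.support.map C).sum := by
        intro p
        have := hDle (p.concat huv)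
        rw [SimpleGraph.Walk.support_concat, List.map_append,
          List.sum_append] at this
        simp at this
        linarith
      linarith [hDge hu (D v - C v) h1]
    -- find a good threshold by a measure (averaging) argument
    have key : ∃ θ : ℝ, θ ∈ Set.Ioc (0:ℝ) 1 ∧
        (Finset.univ.filter fun v => D v - C v < θ ∧ θ ≤ D v).card < k := by
      by_contra hcon
      push_neg at hcon
      have h1 : ∀ θ ∈ Set.Ioc (0:ℝ) 1, (k : ℝ≥0∞) ≤
          ∑ v : V, (Set.Ioc (D v - C v) (D v)).indicator (fun _ => (1:ℝ≥0∞)) θ := by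
        intro θ hθ
        have hc := hcon θ hθ
        calc (k : ℝ≥0∞) ≤ ((Finset.univ.filter fun v => D v - C v < θ ∧ θ ≤ D v).card : ℝ≥0∞) := by
              exact_mod_cast Nat.cast_le.mpr hc
          _ = ∑ v : V, (Set.Ioc (D v - C v) (D v)).indicator (fun _ => (1:ℝ≥0∞)) θ := by
              rw [Finset.card_filter]
              push_cast
              refine Finset.sum_congr rfl fun v _ => ?_
              simp [Set.indicator_apply, Set.mem_Ioc]
      have hmeas : ∀ v : V, Measurable
          ((Set.Ioc (D v - C v) (D v)).indicator (fun _ => (1:ℝ≥0∞))) :=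
        fun v => (measurable_const).indicator measurableSet_Ioc
      have h2 : (k : ℝ≥0∞) * volume (Set.Ioc (0:ℝ) 1) ≤
          ∫⁻ θ in Set.Ioc (0:ℝ) 1,
            ∑ v : V, (Set.Ioc (D v - C v) (D v)).indicator (fun _ => (1:ℝ≥0∞)) θ := by
        rw [← setLIntegral_const]
        exact setLIntegral_mono (Finset.measurable_sum _ fun v _ => hmeas v) h1
      have h3 : ∫⁻ θ in Set.Ioc (0:ℝ) 1,
            ∑ v : V, (Set.Ioc (D v - C v) (D v)).indicator (fun _ => (1:ℝ≥0∞)) θ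
          ≤ ∑ v : V, ENNReal.ofReal (C v) := by
        rw [lintegral_finset_sum _ fun v _ => hmeas v]
        refine Finset.sum_le_sum fun v _ => ?_
        rw [lintegral_indicator measurableSet_Ioc]
        simp only [lintegral_const, Measure.restrict_apply measurableSet_Ioc,
          Measure.restrict_apply MeasurableSet.univ, Set.univ_inter, one_mul]
        calc volume (Set.Ioc (D v - C v) (D v) ∩ Set.Ioc (0:ℝ) 1)
            ≤ volume (Set.Ioc (D v - C v) (D v)) := measure_mono Set.inter_subset_left
          _ = ENNReal.ofReal (C v) := by rw [Real.volume_Ioc]; ring_nf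
      have h4 : ∑ v : V, ENNReal.ofReal (C v) = ENNReal.ofReal (∑ v : V, C v) :=
        (ENNReal.ofReal_sum_of_nonneg fun v _ => hC0 v).symm
      have h5 : (k : ℝ≥0∞) ≤ ENNReal.ofReal ((k:ℝ) - 1/2) := by
        calc (k : ℝ≥0∞) = (k : ℝ≥0∞) * volume (Set.Ioc (0:ℝ) 1) := by
              rw [Real.volume_Ioc]; norm_num
          _ ≤ ENNReal.ofReal (∑ v : V, C v) := by rw [← h4]; exact le_trans h2 h3
          _ ≤ ENNReal.ofReal ((k:ℝ) - 1/2) := ENNReal.ofReal_le_ofReal hsum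
      rw [show ((k : ℝ≥0∞)) = ENNReal.ofReal (k:ℝ) by simp] at h5
      have hk2 : (2:ℝ) ≤ k := by exact_mod_cast hk
      rw [ENNReal.ofReal_le_ofReal_iff (by linarith)] at h5
      linarith
    obtain ⟨θ, ⟨hθ0, hθ1⟩, hcard⟩ := key
    refine ⟨Finset.univ.filter fun v => D v < θ,
            Finset.univ.filter fun v => D v - C v < θ ∧ θ ≤ D v,
            Finset.univ.filter fun v => θ ≤ D v - C v, ?_, ?_, ?_, ?_, ?_, ?_, ?_, hcard⟩
    · intro v
      simp only [Finset.mem_filter, Finset.mem_univ, true_and]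
      rcases lt_or_ge (D v) θ with h | h
      · exact Or.inl h
      · rcases lt_or_ge (D v - C v) θ with h' | h'
        · exact Or.inr (Or.inl ⟨h', h⟩)
        · exact Or.inr (Or.inr h')
    · rw [Finset.disjoint_left]
      intro v hv hv'
      simp only [Finset.mem_filter, Finset.mem_univ, true_and] at hv hv'
      linarith [hv'.2]
    · rw [Finset.disjoint_left]
      intro v hv hv'
      simp only [Finset.mem_filter, Finset.mem_univ, true_and] at hv hv'
      linarith [hC0 v]
    · rw [Finset.disjoint_left]
      intro v hv hv'
      simp only [Finset.mem_filter, Finset.mem_univ, true_and] at hv hv'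
      linarith [hv.1]
    · simp only [Finset.mem_filter, Finset.mem_univ, true_and]
      rw [hDs]; exact hθ0
    · simp only [Finset.mem_filter, Finset.mem_univ, true_and]
      rw [hCt]; linarith
    · intro u hu v hv huv
      simp only [Finset.mem_filter, Finset.mem_univ, true_and] at hu hv
      have hru : Nonempty (G.Walk s u) := by
        by_contra hr
        simp only [hD] at hu
        rw [if_neg hr] at hu
        linarith [hC0 u]
      have := hrelax u v hru huv
      linarith
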